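/- Let m_k denote the minimum cardinality of a greedy defining set of (L_k, lex). Then m_k ≥ 4·m_{k−1} for every k ≥ 1, and m_2 = 6. -/

import Mathlib

open SimpleGraph

/-- First-Fit (greedy) coloring of `G` with respect to the vertex ordering given by the
injective position function `ord` (vertex `u` comes before `v` iff `ord u < ord v`).
Each vertex receives the smallest positive integer not used on earlier neighbors. -/
noncomputable def firstFit {V : Type*} (G : SimpleGraph V) (ord : V → ℕ) : V → ℕ :=
  (InvImage.wf ord Nat.lt_wfRel.wf).fix
    (fun v ih => sInf {c : ℕ | 1 ≤ c ∧ ∀ u, ∀ h : ord u < ord v, G.Adj u v → ih u h ≠ c})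

/-- `FFColors G ord` is the number of colors used by the First-Fit coloring. -/
noncomputable def FFColors {V : Type*} [Fintype V] (G : SimpleGraph V) (ord : V → ℕ) : ℕ :=
  (Finset.univ.image (firstFit G ord)).card

open Classical in
/-- First-Fit coloring of `(G, ord)` subject to the pre-coloring `C₀` on the set `S`:
vertices of `S` keep their pre-assigned colors and are skipped by the scan; every other
vertex receives the smallest positive integer not already assigned (or pre-assigned)
to a neighbor. -/
noncomputable def firstFitWith {V : Type*} (G : SimpleGraph V) (ord : V → ℕ)
    (S : Set V) (C₀ : V → ℕ) : V → ℕ :=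
  (InvImage.wf ord Nat.lt_wfRel.wf).fix
    (fun v ih =>
      if v ∈ S then C₀ v
      else sInf {c : ℕ | 1 ≤ c ∧ (∀ u, G.Adj u v → u ∈ S → C₀ u ≠ c) ∧
        ∀ u, ∀ h : ord u < ord v, G.Adj u v → u ∉ S → ih u h ≠ c})

/-- Position function of the lexicographic order on `V × W` induced by the position
functions `σ` on `V` and `σ'` on `W` (for injective `σ, σ'`: `(u,v)` comes before
`(u',v')` iff `σ u < σ u'`, or `u = u'` and `σ' v < σ' v'`). -/
noncomputable def lexPos {V W : Type*} [Fintype W] (σ : V → ℕ) (σ' : W → ℕ) : V × W → ℕ :=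
  fun p => σ p.1 * (Finset.univ.sup σ' + 1) + σ' p.2

/-- A proper coloring with colors in the positive integers. -/
def IsProperColoring {V : Type*} (G : SimpleGraph V) (C : V → ℕ) : Prop :=
  (∀ v, 1 ≤ C v) ∧ ∀ ⦃u v⦄, G.Adj u v → C u ≠ C v

/-- `D` is a `(C, ord)`-descent: `D = {v} ∪ N` where `C v = y`, `x < y` is a (positive)
color, `N` is the set of neighbors of `v` of color `x`, and every `u ∈ N` comes after
`v` in the order. -/
def IsDescent {V : Type*} (G : SimpleGraph V) (ord : V → ℕ) (C : V → ℕ) (D : Set V) : Prop :=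
  ∃ v x, 1 ≤ x ∧ x < C v ∧
    (∀ u, G.Adj u v → C u = x → ord v < ord u) ∧
    D = insert v {u | G.Adj u v ∧ C u = x}

/-- The Grundy number: the maximum of `FFColors G ord` over all vertex orderings. -/
noncomputable def grundy {V : Type*} [Fintype V] (G : SimpleGraph V) : ℕ :=
  sSup {n | ∃ ord : V → ℕ, Function.Injective ord ∧ FFColors G ord = n}

/-- The independence number of `G`. -/
noncomputable def indepNum {V : Type*} [Fintype V] (G : SimpleGraph V) : ℕ :=
  sSup {n | ∃ s : Finset V, (∀ u ∈ s, ∀ v ∈ s, ¬ G.Adj u v) ∧ s.card = n}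

/-- An `m × n` Latin rectangle: entries in `{1, …, n}`, no repeats in rows or columns. -/
def IsLatinRectangle {m n : ℕ} (R : Fin m → Fin n → ℕ) : Prop :=
  (∀ i j, R i j ∈ Finset.Icc 1 n) ∧ (∀ i, Function.Injective (R i)) ∧
    (∀ j, Function.Injective (fun i => R i j))

/-- `S` is a greedy defining set of the rectangle `R` (cells scanned in lexicographic,
i.e. row-by-row, order): the greedy completion, which skips the cells of `S` (fixed to
their values in `R`) and places in each other cell the smallest positive integer not yet
appearing in its row or column, reproduces `R`.  This is First-Fit on the rook's graph
`K_m □ K_n` subject to the pre-coloring of `S` by `R`. -/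
noncomputable def IsRectGDS {m n : ℕ} (R : Fin m → Fin n → ℕ) (S : Set (Fin m × Fin n)) : Prop :=
  firstFitWith ((⊤ : SimpleGraph (Fin m)).boxProd (⊤ : SimpleGraph (Fin n)))
    (lexPos Fin.val Fin.val) S (fun p => R p.1 p.2) = fun p => R p.1 p.2

/-- The Latin square `L_k` of order `2^k`: the entry in row `i`, column `j` is
`2^k - (i XOR j)`; equivalently the `k`-fold tensor product of `[[2,1],[1,2]]`. -/
def Lsquare (k : ℕ) : Fin (2 ^ k) → Fin (2 ^ k) → ℕ :=
  fun i j => 2 ^ k - (i.val ^^^ j.val)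
open Classical in
lemma ffw_unfold {V : Type*} (G : SimpleGraph V) (ord : V → ℕ) (S : Set V) (C₀ : V → ℕ)
    (v : V) :
    firstFitWith G ord S C₀ v =
      if v ∈ S then C₀ v
      else sInf {c : ℕ | 1 ≤ c ∧ (∀ u, G.Adj u v → u ∈ S → C₀ u ≠ c) ∧
        ∀ u, ord u < ord v → G.Adj u v → u ∉ S → firstFitWith G ord S C₀ u ≠ c} := by
  show WellFounded.fix _ _ _ = _
  rw [WellFounded.fix_eq]
  rfl

lemma ffw_eq_iff {V : Type*} (G : SimpleGraph V) (ord : V → ℕ) (S : Set V) (R : V → ℕ)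
    (h1 : ∀ v, 1 ≤ R v) (h2 : ∀ u v, G.Adj u v → R u ≠ R v) :
    firstFitWith G ord S R = R ↔
      ∀ v ∉ S, ∀ c, 1 ≤ c → c < R v →
        ∃ u, G.Adj u v ∧ (u ∈ S ∨ ord u < ord v) ∧ R u = c := by
  constructor
  · intro hff v hv c hc1 hc2
    have h := ffw_unfold G ord S R v
    rw [hff, if_neg hv] at h
    have hcn : c ∉ {c : ℕ | 1 ≤ c ∧ (∀ u, G.Adj u v → u ∈ S → R u ≠ c) ∧
        ∀ u, ord u < ord v → G.Adj u v → u ∉ S → R u ≠ c} := by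
      intro hcm
      exact absurd (h ▸ Nat.sInf_le hcm) (by omega)
    have hcn' : ¬((∀ u, G.Adj u v → u ∈ S → R u ≠ c) ∧
        ∀ u, ord u < ord v → G.Adj u v → u ∉ S → R u ≠ c) := fun hh => hcn ⟨hc1, hh⟩
    rw [not_and_or] at hcn'
    rcases hcn' with h' | h'
    · push_neg at h'
      obtain ⟨u, hadj, huS, hru⟩ := h'
      exact ⟨u, hadj, Or.inl huS, hru⟩
    · push_neg at h'
      obtain ⟨u, hlt, hadj, huS, hru⟩ := h'
      exact ⟨u, hadj, Or.inr hlt, hru⟩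
  · intro hW
    funext v
    suffices H : ∀ n v, ord v = n → firstFitWith G ord S R v = R v from H _ v rfl
    intro n
    induction n using Nat.strong_induction_on with
    | _ n ih =>
    intro v hv
    subst hv
    rw [ffw_unfold]
    by_cases hv : v ∈ S
    · simp [hv]
    · rw [if_neg hv]
      have hset : {c : ℕ | 1 ≤ c ∧ (∀ u, G.Adj u v → u ∈ S → R u ≠ c) ∧
          ∀ u, ord u < ord v → G.Adj u v → u ∉ S → firstFitWith G ord S R u ≠ c}
          = {c : ℕ | 1 ≤ c ∧ ∀ u, G.Adj u v → (u ∈ S ∨ ord u < ord v) → R u ≠ c} := by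
        ext c
        simp only [Set.mem_setOf_eq]
        constructor
        · rintro ⟨hc, hS, hE⟩
          refine ⟨hc, fun u hadj hcase => ?_⟩
          rcases hcase with h | h
          · exact hS u hadj h
          · by_cases huS : u ∈ S
            · exact hS u hadj huS
            · have := hE u h hadj huS
              rwa [ih (ord u) h u rfl] at this
        · rintro ⟨hc, hall⟩
          refine ⟨hc, fun u hadj huS => hall u hadj (Or.inl huS), fun u hlt hadj huS => ?_⟩
          rw [ih (ord u) hlt u rfl]
          exact hall u hadj (Or.inr hlt)
      rw [hset]
      have hmem : R v ∈ {c : ℕ | 1 ≤ c ∧ ∀ u, G.Adj u v → (u ∈ S ∨ ord u < ord v) → R u ≠ c} :=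
        ⟨h1 v, fun u hadj _ => h2 u v hadj⟩
      refine le_antisymm (Nat.sInf_le hmem) ?_
      by_contra hlt
      push_neg at hlt
      have hs := Nat.sInf_mem (⟨R v, hmem⟩ : Set.Nonempty _)
      obtain ⟨hc1, hall⟩ := hs
      obtain ⟨u, hadj, hcase, hru⟩ := hW v hv _ hc1 hlt
      exact hall u hadj hcase hru

lemma sup_fin_val {N : ℕ} (hN : 0 < N) : (Finset.univ.sup (Fin.val : Fin N → ℕ)) = N - 1 := by
  apply le_antisymm
  · exact Finset.sup_le fun i _ => by omega
  · exact Finset.le_sup (f := (Fin.val : Fin N → ℕ)) (b := ⟨N-1, by omega⟩) (Finset.mem_univ _)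

lemma lexPos_fin {N : ℕ} (hN : 0 < N) (p : Fin N × Fin N) :
    lexPos (Fin.val) (Fin.val) p = p.1.val * N + p.2.val := by
  unfold lexPos
  rw [sup_fin_val hN]
  congr 1
  congr 1
  omega

lemma rook_adj {M N : ℕ} (u v : Fin M × Fin N) :
    ((⊤ : SimpleGraph (Fin M)).boxProd (⊤ : SimpleGraph (Fin N))).Adj u v ↔
      ((u.1 = v.1 ∧ u.2 ≠ v.2) ∨ (u.2 = v.2 ∧ u.1 ≠ v.1)) := by
  rw [SimpleGraph.boxProd_adj]
  simp only [SimpleGraph.top_adj]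
  tauto

lemma Lsquare_pos (k : ℕ) (i j : Fin (2^k)) : 1 ≤ Lsquare k i j := by
  have h := Nat.xor_lt_two_pow i.isLt j.isLt
  exact Nat.sub_pos_of_lt h

lemma Lsquare_le (k : ℕ) (i j : Fin (2^k)) : Lsquare k i j ≤ 2^k :=
  Nat.sub_le _ _

lemma Lsquare_ne {k : ℕ} {u v : Fin (2^k) × Fin (2^k)}
    (h : (u.1 = v.1 ∧ u.2 ≠ v.2) ∨ (u.2 = v.2 ∧ u.1 ≠ v.1)) :
    Lsquare k u.1 u.2 ≠ Lsquare k v.1 v.2 := by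
  have hx := Nat.xor_lt_two_pow u.1.isLt u.2.isLt
  have hy := Nat.xor_lt_two_pow v.1.isLt v.2.isLt
  have hne : u.1.val ^^^ u.2.val ≠ v.1.val ^^^ v.2.val := by
    rcases h with ⟨h1, h2⟩ | ⟨h1, h2⟩
    · rw [h1]
      intro he
      exact h2 (Fin.val_injective (Nat.xor_right_inj.mp he))
    · rw [h1]
      intro he
      exact h2 (Fin.val_injective (Nat.xor_left_inj.mp he))
  unfold Lsquare
  intro he
  apply hne
  have h1 := Nat.sub_sub_self (Nat.le_of_lt hx)
  have h2 := Nat.sub_sub_self (Nat.le_of_lt hy)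
  rw [← h1, ← h2, he]

/-- decidable/elementary GDS condition for `Lsquare k` -/
def GDScond (k : ℕ) (S : Finset (Fin (2^k) × Fin (2^k))) : Prop :=
  ∀ p : Fin (2^k) × Fin (2^k), p ∉ S → ∀ c, 1 ≤ c → c < Lsquare k p.1 p.2 →
    ∃ u : Fin (2^k) × Fin (2^k), ((u.1 = p.1 ∧ u.2 ≠ p.2) ∨ (u.2 = p.2 ∧ u.1 ≠ p.1)) ∧
      (u ∈ S ∨ u.1.val * 2^k + u.2.val < p.1.val * 2^k + p.2.val) ∧ Lsquare k u.1 u.2 = c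

lemma gds_iff (k : ℕ) (S : Finset (Fin (2^k) × Fin (2^k))) :
    IsRectGDS (Lsquare k) ↑S ↔ GDScond k S := by
  unfold IsRectGDS
  rw [ffw_eq_iff _ _ _ _ (fun v => Lsquare_pos k v.1 v.2)
    (fun u v hadj => Lsquare_ne ((rook_adj u v).mp hadj))]
  unfold GDScond
  constructor
  · intro H p hp c hc1 hc2
    obtain ⟨u, hadj, hcase, hval⟩ := H p (by simpa using hp) c hc1 hc2
    refine ⟨u, (rook_adj u p).mp hadj, ?_, hval⟩
    rcases hcase with h | h
    · exact Or.inl (by simpa using h)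
    · right; rwa [lexPos_fin (Nat.two_pow_pos k),
        lexPos_fin (Nat.two_pow_pos k)] at h
  · intro H p hp c hc1 hc2
    obtain ⟨u, hadj, hcase, hval⟩ := H p (by simpa using hp) c hc1 hc2
    refine ⟨u, (rook_adj u p).mpr hadj, ?_, hval⟩
    rcases hcase with h | h
    · exact Or.inl (by simpa using h)
    · right; rwa [lexPos_fin (Nat.two_pow_pos k),
        lexPos_fin (Nat.two_pow_pos k)]

lemma xorSplit {m a b x y : ℕ} (hx : x < 2^m) (hy : y < 2^m) :
    (x + a*2^m) ^^^ (y + b*2^m) = (x ^^^ y) + (a ^^^ b) * 2^m := by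
  apply Nat.eq_of_testBit_eq
  intro j
  have hxy := Nat.xor_lt_two_pow hx hy
  rw [Nat.add_comm x, Nat.add_comm y, Nat.add_comm (x^^^y),
    Nat.mul_comm a, Nat.mul_comm b, Nat.mul_comm (a^^^b)]
  rw [Nat.testBit_xor, Nat.testBit_two_pow_mul_add _ hx,
    Nat.testBit_two_pow_mul_add _ hy, Nat.testBit_two_pow_mul_add _ hxy]
  by_cases hj : j < m
  · simp [hj]
  · simp [hj, Nat.testBit_xor]

/-- quadrant embedding -/
def emb (k : ℕ) (a b : Fin 2) (p : Fin (2^k) × Fin (2^k)) :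
    Fin (2^(k+1)) × Fin (2^(k+1)) :=
  (⟨p.1.val + a.val * 2^k, by
      have h1 := p.1.isLt
      have h2 : a.val * 2^k ≤ 1 * 2^k := Nat.mul_le_mul_right _ (by omega)
      rw [pow_succ]; omega⟩,
   ⟨p.2.val + b.val * 2^k, by
      have h1 := p.2.isLt
      have h2 : b.val * 2^k ≤ 1 * 2^k := Nat.mul_le_mul_right _ (by omega)
      rw [pow_succ]; omega⟩)

lemma two_cases (a : Fin 2) : a.val * 2^k = 0 ∨ a.val * 2^k = 2^k := by
  have := a.isLt
  interval_cases h : a.val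
  · simp
  · simp

lemma emb_inj (k : ℕ) {a b a' b' : Fin 2} {p p' : Fin (2^k) × Fin (2^k)}
    (h : emb k a b p = emb k a' b' p') : a = a' ∧ b = b' ∧ p = p' := by
  have h1 : p.1.val + a.val * 2^k = p'.1.val + a'.val * 2^k := congrArg (fun q => q.1.val) h
  have h2 : p.2.val + b.val * 2^k = p'.2.val + b'.val * 2^k := congrArg (fun q => q.2.val) h
  have i1 := p.1.isLt; have i2 := p.2.isLt; have i3 := p'.1.isLt; have i4 := p'.2.isLt
  have ja := a.isLt; have jb := b.isLt; have ja' := a'.isLt; have jb' := b'.isLt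
  have c1 : a.val = 0 ∨ a.val = 1 := by omega
  have c2 : b.val = 0 ∨ b.val = 1 := by omega
  have c3 : a'.val = 0 ∨ a'.val = 1 := by omega
  have c4 : b'.val = 0 ∨ b'.val = 1 := by omega
  have e1 : a.val = a'.val ∧ p.1.val = p'.1.val := by
    rcases c1 with h'|h' <;> rcases c3 with h''|h'' <;> rw [h', h''] at h1 <;>
      simp only [Nat.zero_mul, Nat.one_mul, Nat.add_zero] at h1 <;> omega
  have e2 : b.val = b'.val ∧ p.2.val = p'.2.val := by
    rcases c2 with h'|h' <;> rcases c4 with h''|h'' <;> rw [h', h''] at h2 <;>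
      simp only [Nat.zero_mul, Nat.one_mul, Nat.add_zero] at h2 <;> omega
  exact ⟨Fin.ext e1.1, Fin.ext e2.1, Prod.ext (Fin.ext e1.2) (Fin.ext e2.2)⟩

lemma Lsquare_emb (k : ℕ) (a b : Fin 2) (p : Fin (2^k) × Fin (2^k)) :
    Lsquare (k+1) (emb k a b p).1 (emb k a b p).2 =
      Lsquare k p.1 p.2 + (1 - (a.val ^^^ b.val)) * 2^k := by
  have hx := p.1.isLt; have hy := p.2.isLt
  have hxy := Nat.xor_lt_two_pow hx hy
  have hab : a.val ^^^ b.val < 2 := Nat.xor_lt_two_pow (n := 1) a.isLt b.isLt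
  show 2^(k+1) - ((p.1.val + a.val * 2^k) ^^^ (p.2.val + b.val * 2^k)) = _
  rw [xorSplit hx hy, pow_succ]
  unfold Lsquare
  have hD : a.val ^^^ b.val = 0 ∨ a.val ^^^ b.val = 1 := by omega
  rcases hD with h | h <;> rw [h] <;> simp <;> omega

lemma quadrant_gds (k : ℕ) (a b : Fin 2)
    (S : Finset (Fin (2^(k+1)) × Fin (2^(k+1)))) (hS : GDScond (k+1) S) :
    GDScond k (Finset.univ.filter (fun p => emb k a b p ∈ S)) := by
  intro p hp c hc1 hc2
  have hdlt : a.val ^^^ b.val < 2 := Nat.xor_lt_two_pow (n := 1) a.isLt b.isLt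
  set d := a.val ^^^ b.val with hd
  have hpS : emb k a b p ∉ S := fun h => hp (Finset.mem_filter.mpr ⟨Finset.mem_univ _, h⟩)
  have hLp := Lsquare_emb k a b p
  rw [← hd] at hLp
  have hn : (0:ℕ) < 2^k := Nat.two_pow_pos k
  have hcn : c < 2^k := lt_of_lt_of_le hc2 (Lsquare_le k p.1 p.2)
  have hc2' : c + (1-d)*2^k < Lsquare (k+1) (emb k a b p).1 (emb k a b p).2 := by
    rw [hLp]; omega
  obtain ⟨U, hadjU, hcaseU, hvalU⟩ := hS (emb k a b p) hpS (c + (1-d)*2^k) (by omega) hc2'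
  have hM : (2:ℕ)^(k+1) = 2^k*2 := pow_succ 2 k
  rcases hadjU with ⟨hU1, hU2⟩ | ⟨hU2, hU1⟩
  · -- same row
    set j' := U.2.val % 2^k with hj'def
    set b' := U.2.val / 2^k with hb'def
    have hj' : j' < 2^k := Nat.mod_lt _ hn
    have hb'2 : b' < 2 := by
      have := U.2.isLt
      rw [hb'def]
      apply Nat.div_lt_of_lt_mul
      omega
    have hJeq : U.2.val = j' + b' * 2^k := by
      rw [Nat.mul_comm b' (2^k)]
      exact (Nat.mod_add_div _ _).symm
    have hU1v : U.1.val = p.1.val + a.val * 2^k := by rw [hU1]; rfl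
    have hval2 : 2^(k+1) - (U.1.val ^^^ U.2.val) = c + (1-d)*2^k := hvalU
    rw [hU1v, hJeq, xorSplit p.1.isLt hj', hM] at hval2
    have hX : p.1.val ^^^ j' < 2^k := Nat.xor_lt_two_pow p.1.isLt hj'
    have hE2 : a.val ^^^ b' < 2 := Nat.xor_lt_two_pow (n := 1) a.isLt hb'2
    have hEc : a.val ^^^ b' = 0 ∨ a.val ^^^ b' = 1 := by omega
    have hDc : d = 0 ∨ d = 1 := by omega
    have key : a.val ^^^ b' = d ∧ 2^k - (p.1.val ^^^ j') = c := by
      rcases hEc with h|h <;> rcases hDc with h'|h' <;> rw [h, h'] at hval2 <;> omega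
    have hb'b : b' = b.val := Nat.xor_right_inj.mp (key.1.trans hd)
    have hne : (⟨j', hj'⟩ : Fin (2^k)) ≠ p.2 := by
      intro he
      apply hU2
      apply Fin.ext
      have : j' = p.2.val := congrArg Fin.val he
      rw [hJeq, hb'b, this]
      rfl
    refine ⟨(p.1, ⟨j', hj'⟩), Or.inl ⟨rfl, hne⟩, ?_, key.2⟩
    rcases hcaseU with hUS | hlt
    · left
      refine Finset.mem_filter.mpr ⟨Finset.mem_univ _, ?_⟩
      have : emb k a b (p.1, ⟨j', hj'⟩) = U := by
        apply Prod.ext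
        · exact Fin.ext hU1v.symm
        · apply Fin.ext
          show j' + b.val * 2^k = U.2.val
          rw [hJeq, hb'b]
      rwa [this]
    · right
      rw [← hU1] at hlt
      have hpe : (emb k a b p).2.val = p.2.val + b.val * 2^k := rfl
      rw [hpe, hJeq, hb'b] at hlt
      have hj'lt : j' < p.2.val := by omega
      show p.1.val * 2^k + j' < p.1.val * 2^k + p.2.val
      omega
  · -- same column
    set i' := U.1.val % 2^k with hi'def
    set a' := U.1.val / 2^k with ha'def
    have hi' : i' < 2^k := Nat.mod_lt _ hn
    have ha'2 : a' < 2 := by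
      have := U.1.isLt
      rw [ha'def]
      apply Nat.div_lt_of_lt_mul
      omega
    have hIeq : U.1.val = i' + a' * 2^k := by
      rw [Nat.mul_comm a' (2^k)]
      exact (Nat.mod_add_div _ _).symm
    have hU2v : U.2.val = p.2.val + b.val * 2^k := by rw [hU2]; rfl
    have hval2 : 2^(k+1) - (U.1.val ^^^ U.2.val) = c + (1-d)*2^k := hvalU
    rw [hU2v, hIeq, xorSplit hi' p.2.isLt, hM] at hval2
    have hX : i' ^^^ p.2.val < 2^k := Nat.xor_lt_two_pow hi' p.2.isLt
    have hE2 : a' ^^^ b.val < 2 := Nat.xor_lt_two_pow (n := 1) ha'2 b.isLt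
    have hEc : a' ^^^ b.val = 0 ∨ a' ^^^ b.val = 1 := by omega
    have hDc : d = 0 ∨ d = 1 := by omega
    have key : a' ^^^ b.val = d ∧ 2^k - (i' ^^^ p.2.val) = c := by
      rcases hEc with h|h <;> rcases hDc with h'|h' <;> rw [h, h'] at hval2 <;> omega
    have ha'a : a' = a.val := Nat.xor_left_inj.mp (key.1.trans hd)
    have hne : (⟨i', hi'⟩ : Fin (2^k)) ≠ p.1 := by
      intro he
      apply hU1
      apply Fin.ext
      have : i' = p.1.val := congrArg Fin.val he
      rw [hIeq, ha'a, this]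
      rfl
    refine ⟨(⟨i', hi'⟩, p.2), Or.inr ⟨rfl, hne⟩, ?_, key.2⟩
    rcases hcaseU with hUS | hlt
    · left
      refine Finset.mem_filter.mpr ⟨Finset.mem_univ _, ?_⟩
      have : emb k a b (⟨i', hi'⟩, p.2) = U := by
        apply Prod.ext
        · apply Fin.ext
          show i' + a.val * 2^k = U.1.val
          rw [hIeq, ha'a]
        · exact Fin.ext hU2v.symm
      rwa [this]
    · right
      rw [← hU2] at hlt
      have hpe : (emb k a b p).1.val = p.1.val + a.val * 2^k := rfl
      rw [hpe, hIeq, ha'a] at hlt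
      have hU2lt := U.2.isLt
      have hplt := (emb k a b p).2.isLt
      have hi'lt : i' < p.1.val := by
        rcases Nat.lt_or_ge i' p.1.val with h|h
        · exact h
        · exfalso
          have h1 : (i' + a.val*2^k) * 2^(k+1) ≥ (p.1.val + a.val*2^k) * 2^(k+1) := by
            apply Nat.mul_le_mul_right
            omega
          omega
      show i' * 2^k + p.2.val < p.1.val * 2^k + p.2.val
      have : i' * 2^k + 2^k ≤ p.1.val * 2^k := by
        have := Nat.mul_le_mul_right (2^k) (Nat.succ_le_of_lt hi'lt)
        rwa [Nat.succ_mul] at this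
      omega

lemma emb_injective (k : ℕ) (a b : Fin 2) : Function.Injective (emb k a b) :=
  fun _ _ h => (emb_inj k h).2.2

lemma count_bound (k : ℕ) (S : Finset (Fin (2^(k+1)) × Fin (2^(k+1))))
    (hS : GDScond (k+1) S) :
    4 * sInf {c : ℕ | ∃ S' : Finset (Fin (2^k) × Fin (2^k)),
      IsRectGDS (Lsquare k) ↑S' ∧ S'.card = c} ≤ S.card := by
  set m' := sInf {c : ℕ | ∃ S' : Finset (Fin (2^k) × Fin (2^k)),
      IsRectGDS (Lsquare k) ↑S' ∧ S'.card = c} with hm'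
  set Sq : Fin 2 × Fin 2 → Finset (Fin (2^k) × Fin (2^k)) :=
    fun q => Finset.univ.filter (fun p => emb k q.1 q.2 p ∈ S) with hSq
  have h1 : ∀ q : Fin 2 × Fin 2, m' ≤ (Sq q).card := by
    intro q
    exact Nat.sInf_le ⟨Sq q, (gds_iff _ _).mpr (quadrant_gds k q.1 q.2 S hS), rfl⟩
  have hdisj : ∀ q ∈ (Finset.univ : Finset (Fin 2 × Fin 2)), ∀ q' ∈ Finset.univ, q ≠ q' →
      Disjoint ((Sq q).image (emb k q.1 q.2)) ((Sq q').image (emb k q'.1 q'.2)) := by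
    intro q _ q' _ hne
    rw [Finset.disjoint_left]
    intro x hx hx'
    obtain ⟨p, _, hp⟩ := Finset.mem_image.mp hx
    obtain ⟨p', _, hp'⟩ := Finset.mem_image.mp hx'
    obtain ⟨e1, e2, _⟩ := emb_inj k (hp.trans hp'.symm)
    exact hne (Prod.ext e1 e2)
  have hsub : (Finset.univ.biUnion
      (fun q : Fin 2 × Fin 2 => (Sq q).image (emb k q.1 q.2))) ⊆ S := by
    intro x hx
    obtain ⟨q, _, hq⟩ := Finset.mem_biUnion.mp hx
    obtain ⟨p, hp, hpx⟩ := Finset.mem_image.mp hq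
    have := (Finset.mem_filter.mp hp).2
    rwa [hpx] at this
  have hcard := Finset.card_biUnion hdisj
  have himg : ∀ q : Fin 2 × Fin 2, ((Sq q).image (emb k q.1 q.2)).card = (Sq q).card :=
    fun q => Finset.card_image_of_injective _ (emb_injective k q.1 q.2)
  have hle := Finset.card_le_card hsub
  rw [hcard] at hle
  have hsum : ∑ q : Fin 2 × Fin 2, ((Sq q).image (emb k q.1 q.2)).card
      = ∑ q : Fin 2 × Fin 2, (Sq q).card := Finset.sum_congr rfl (fun q _ => himg q)
  rw [hsum] at hle
  calc 4 * m' = ∑ _q : Fin 2 × Fin 2, m' := by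
        rw [Finset.sum_const, Finset.card_univ]
        simp [mul_comm]
    _ ≤ ∑ q : Fin 2 × Fin 2, (Sq q).card := Finset.sum_le_sum (fun q _ => h1 q)
    _ ≤ S.card := hle

/-- bounded, decidable form of `GDScond` -/
def GDScondD (k : ℕ) (S : Finset (Fin (2^k) × Fin (2^k))) : Prop :=
  ∀ p : Fin (2^k) × Fin (2^k), p ∉ S → ∀ c < 2^k, 1 ≤ c → c < Lsquare k p.1 p.2 →
    ∃ u : Fin (2^k) × Fin (2^k), ((u.1 = p.1 ∧ u.2 ≠ p.2) ∨ (u.2 = p.2 ∧ u.1 ≠ p.1)) ∧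
      (u ∈ S ∨ u.1.val * 2^k + u.2.val < p.1.val * 2^k + p.2.val) ∧ Lsquare k u.1 u.2 = c

set_option synthInstance.maxSize 2000 in
set_option synthInstance.maxHeartbeats 2000000 in
instance (k : ℕ) (S : Finset (Fin (2^k) × Fin (2^k))) : Decidable (GDScondD k S) := by
  unfold GDScondD Lsquare
  infer_instance

lemma gds_iff_D (k : ℕ) (S : Finset (Fin (2^k) × Fin (2^k))) :
    GDScond k S ↔ GDScondD k S := by
  constructor
  · exact fun H p hp c _ hc1 hc2 => H p hp c hc1 hc2
  · exact fun H p hp c hc1 hc2 =>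
      H p hp c (lt_of_lt_of_le hc2 (Lsquare_le k p.1 p.2)) hc1 hc2

lemma univ_gds (k : ℕ) : GDScond k (Finset.univ : Finset (Fin (2^k) × Fin (2^k))) :=
  fun p hp => absurd (Finset.mem_univ p) hp

def assemble (t00 t01 t10 t11 : Finset (Fin (2^1) × Fin (2^1))) :
    Finset (Fin (2^2) × Fin (2^2)) :=
  t00.image (emb 1 0 0) ∪ t01.image (emb 1 0 1) ∪ t10.image (emb 1 1 0) ∪ t11.image (emb 1 1 1)

lemma emb_surj (k : ℕ) (P : Fin (2^(k+1)) × Fin (2^(k+1))) :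
    ∃ (a b : Fin 2) (p : Fin (2^k) × Fin (2^k)), emb k a b p = P := by
  have hn : (0:ℕ) < 2^k := Nat.two_pow_pos k
  have hM : (2:ℕ)^(k+1) = 2^k*2 := pow_succ 2 k
  have h1 := P.1.isLt
  have h2 := P.2.isLt
  refine ⟨⟨P.1.val / 2^k, by apply Nat.div_lt_of_lt_mul; omega⟩,
          ⟨P.2.val / 2^k, by apply Nat.div_lt_of_lt_mul; omega⟩,
          (⟨P.1.val % 2^k, Nat.mod_lt _ hn⟩, ⟨P.2.val % 2^k, Nat.mod_lt _ hn⟩), ?_⟩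
  apply Prod.ext
  · apply Fin.ext
    show P.1.val % 2^k + (P.1.val / 2^k) * 2^k = P.1.val
    rw [Nat.mul_comm]
    exact Nat.mod_add_div _ _
  · apply Fin.ext
    show P.2.val % 2^k + (P.2.val / 2^k) * 2^k = P.2.val
    rw [Nat.mul_comm]
    exact Nat.mod_add_div _ _

lemma imgs_disj (k : ℕ) {a b a' b' : Fin 2} (h : ¬(a = a' ∧ b = b'))
    (t t' : Finset (Fin (2^k) × Fin (2^k))) :
    Disjoint (t.image (emb k a b)) (t'.image (emb k a' b')) := by
  rw [Finset.disjoint_left]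
  intro x hx hx'
  obtain ⟨p, _, hp⟩ := Finset.mem_image.mp hx
  obtain ⟨p', _, hp'⟩ := Finset.mem_image.mp hx'
  obtain ⟨e1, e2, _⟩ := emb_inj k (hp.trans hp'.symm)
  exact h ⟨e1, e2⟩

lemma assemble_card (t00 t01 t10 t11 : Finset (Fin (2^1) × Fin (2^1))) :
    (assemble t00 t01 t10 t11).card = t00.card + t01.card + t10.card + t11.card := by
  unfold assemble
  rw [Finset.card_union_of_disjoint, Finset.card_union_of_disjoint,
    Finset.card_union_of_disjoint,
    Finset.card_image_of_injective _ (emb_injective 1 0 0),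
    Finset.card_image_of_injective _ (emb_injective 1 0 1),
    Finset.card_image_of_injective _ (emb_injective 1 1 0),
    Finset.card_image_of_injective _ (emb_injective 1 1 1)]
  · exact imgs_disj 1 (by decide) _ _
  · rw [Finset.disjoint_union_left]
    exact ⟨imgs_disj 1 (by decide) _ _, imgs_disj 1 (by decide) _ _⟩
  · rw [Finset.disjoint_union_left, Finset.disjoint_union_left]
    exact ⟨⟨imgs_disj 1 (by decide) _ _, imgs_disj 1 (by decide) _ _⟩,
      imgs_disj 1 (by decide) _ _⟩

lemma assemble_traces (S : Finset (Fin (2^2) × Fin (2^2))) :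
    assemble (Finset.univ.filter (fun p => emb 1 0 0 p ∈ S))
      (Finset.univ.filter (fun p => emb 1 0 1 p ∈ S))
      (Finset.univ.filter (fun p => emb 1 1 0 p ∈ S))
      (Finset.univ.filter (fun p => emb 1 1 1 p ∈ S)) = S := by
  ext x
  simp only [assemble, Finset.mem_union, Finset.mem_image, Finset.mem_filter,
    Finset.mem_univ, true_and]
  constructor
  · rintro (((⟨p, hp, rfl⟩ | ⟨p, hp, rfl⟩) | ⟨p, hp, rfl⟩) | ⟨p, hp, rfl⟩) <;> exact hp
  · intro hx
    obtain ⟨a, b, p, rfl⟩ := emb_surj 1 x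
    fin_cases a <;> fin_cases b
    · exact Or.inl (Or.inl (Or.inl ⟨p, hx, rfl⟩))
    · exact Or.inl (Or.inl (Or.inr ⟨p, hx, rfl⟩))
    · exact Or.inl (Or.inr ⟨p, hx, rfl⟩)
    · exact Or.inr ⟨p, hx, rfl⟩

def S6 : Finset (Fin (2^2) × Fin (2^2)) :=
  {(⟨0, by norm_num⟩, ⟨0, by norm_num⟩), (⟨0, by norm_num⟩, ⟨1, by norm_num⟩),
   (⟨1, by norm_num⟩, ⟨1, by norm_num⟩), (⟨1, by norm_num⟩, ⟨2, by norm_num⟩),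
   (⟨2, by norm_num⟩, ⟨0, by norm_num⟩), (⟨2, by norm_num⟩, ⟨2, by norm_num⟩)}

lemma S6_gds : GDScondD 2 S6 := by decide

lemma S6_card : S6.card = 6 := by decide

set_option synthInstance.maxSize 4000 in
set_option synthInstance.maxHeartbeats 4000000 in
set_option maxHeartbeats 1000000000 in
lemma no_small_gds : ∀ t00 t01 t10 t11 : Finset (Fin (2^1) × Fin (2^1)),
    t00.card + t01.card + t10.card + t11.card ≤ 5 →
    GDScondD 1 t00 → GDScondD 1 t01 → GDScondD 1 t10 → GDScondD 1 t11 →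
    ¬ GDScondD 2 (assemble t00 t01 t10 t11) := by decide


/-- Let `m_k` be the minimum cardinality of a greedy defining set of
`(L_k, lex)`.  Then `m_k ≥ 4·m_(k-1)` for all `k ≥ 1`, and `m_2 = 6`. -/
theorem Lk_min_gds_recurrence (m : ℕ → ℕ)
    (hm : ∀ k, m k = sInf {c : ℕ | ∃ S : Finset (Fin (2 ^ k) × Fin (2 ^ k)),
      IsRectGDS (Lsquare k) ↑S ∧ S.card = c}) :
    (∀ k, 1 ≤ k → 4 * m (k - 1) ≤ m k) ∧ m 2 = 6 := by
  have hne : ∀ k, {c : ℕ | ∃ S : Finset (Fin (2 ^ k) × Fin (2 ^ k)),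
      IsRectGDS (Lsquare k) ↑S ∧ S.card = c}.Nonempty :=
    fun k => ⟨_, Finset.univ, (gds_iff _ _).mpr (univ_gds k), rfl⟩
  constructor
  · intro k hk
    obtain ⟨K, rfl⟩ : ∃ K, k = K + 1 := ⟨k - 1, by omega⟩
    have hstep : (K + 1) - 1 = K := by omega
    rw [hstep, hm (K + 1), hm K]
    obtain ⟨S, hS, hc⟩ := Nat.sInf_mem (hne (K + 1))
    rw [← hc]
    exact count_bound K S ((gds_iff _ _).mp hS)
  · rw [hm 2]
    apply le_antisymm
    · exact Nat.sInf_le ⟨S6, (gds_iff _ _).mpr ((gds_iff_D _ _).mpr S6_gds), S6_card⟩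
    · obtain ⟨S, hS, hc⟩ := Nat.sInf_mem (hne 2)
      rw [← hc]
      by_contra h
      push_neg at h
      have hcard : S.card ≤ 5 := by omega
      have hG2 : GDScond 2 S := (gds_iff _ _).mp hS
      have hG2' : GDScond (1 + 1) S := hG2
      have h00 : GDScondD 1 (Finset.univ.filter (fun p => emb 1 0 0 p ∈ S)) :=
        (gds_iff_D _ _).mp (quadrant_gds 1 0 0 S hG2')
      have h01 : GDScondD 1 (Finset.univ.filter (fun p => emb 1 0 1 p ∈ S)) :=
        (gds_iff_D _ _).mp (quadrant_gds 1 0 1 S hG2')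
      have h10 : GDScondD 1 (Finset.univ.filter (fun p => emb 1 1 0 p ∈ S)) :=
        (gds_iff_D _ _).mp (quadrant_gds 1 1 0 S hG2')
      have h11 : GDScondD 1 (Finset.univ.filter (fun p => emb 1 1 1 p ∈ S)) :=
        (gds_iff_D _ _).mp (quadrant_gds 1 1 1 S hG2')
      have hA := assemble_traces S
      have hAc := assemble_card (Finset.univ.filter (fun p => emb 1 0 0 p ∈ S))
        (Finset.univ.filter (fun p => emb 1 0 1 p ∈ S))
        (Finset.univ.filter (fun p => emb 1 1 0 p ∈ S))
        (Finset.univ.filter (fun p => emb 1 1 1 p ∈ S))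
      rw [hA] at hAc
      refine no_small_gds _ _ _ _ (by omega) h00 h01 h10 h11 ?_
      rw [hA]
      exact (gds_iff_D _ _).mp hG2
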